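/- arXiv:2006.04268 — 7 statements merged into one kernel-verified Lean document; each statement's English description precedes it below -/
import Mathlib

section
/- A permutation σ of order n > 1 is a king permutation (i.e., |σ_{i+1} − σ_i| > 1 for all 1 ≤ i ≤ n−1) if and only if its breadth br(σ) = min_{i≠j} (|i−j| + |σ_i−σ_j|) is at least 3. -/
open Finset

/-- Manhattan distance between the plot points `i` and `j` of `σ`. -/
def mdist {n : ℕ} (σ : Fin n → Fin n) (i j : Fin n) : ℕ :=
  Nat.dist (i : ℕ) (j : ℕ) + Nat.dist (σ i : ℕ) (σ j : ℕ)

/-- The breadth of `σ`: minimum Manhattan distance over distinct pairs (⊤ if no pairs). -/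
noncomputable def br {n : ℕ} (σ : Fin n → Fin n) : ℕ∞ :=
  sInf {x : ℕ∞ | ∃ i j : Fin n, i ≠ j ∧ x = (mdist σ i j : ℕ∞)}

/-- Cyclic Manhattan distance: `|σ j - σ i| + min (|j-i|) (n - |j-i|)`. -/
def cdist {n : ℕ} (σ : Fin n → Fin n) (i j : Fin n) : ℕ :=
  Nat.dist (σ i : ℕ) (σ j : ℕ) +
    min (Nat.dist (i : ℕ) (j : ℕ)) (n - Nat.dist (i : ℕ) (j : ℕ))

/-- Cyclic breadth of `σ`. -/
noncomputable def cbr {n : ℕ} (σ : Fin n → Fin n) : ℕ∞ :=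
  sInf {x : ℕ∞ | ∃ i j : Fin n, i ≠ j ∧ x = (cdist σ i j : ℕ∞)}

/-- King permutation: consecutive entries differ by more than 1. -/
def IsKing {n : ℕ} (σ : Fin n → Fin n) : Prop :=
  ∀ i j : Fin n, (j : ℕ) = (i : ℕ) + 1 → 1 < Nat.dist (σ i : ℕ) (σ j : ℕ)

/-- Cylindrical king permutation: cyclically consecutive entries differ by more than 1. -/
def IsCylKing {n : ℕ} (σ : Fin n → Fin n) : Prop :=
  ∀ i j : Fin n, i ≠ j → (j : ℕ) = ((i : ℕ) + 1) % n →
    1 < Nat.dist (σ i : ℕ) (σ j : ℕ)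

/-- `π` is the (standardized) pattern formed by the entries of `σ` at the index set `s`. -/
def IsPatternOn {n m : ℕ} (σ : Fin n → Fin n) (s : Finset (Fin n))
    (π : Fin m → Fin m) : Prop :=
  ∃ f : Fin m → Fin n, StrictMono f ∧ (∀ a, f a ∈ s) ∧ s.card = m ∧
    ∀ a b, (π a < π b ↔ σ (f a) < σ (f b))

/-- `σ` contains the pattern `π` (classical pattern containment). -/
def ContainsPat {n m : ℕ} (σ : Fin n → Fin n) (π : Fin m → Fin m) : Prop :=
  ∃ f : Fin m → Fin n, StrictMono f ∧ ∀ a b, (π a < π b ↔ σ (f a) < σ (f b))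

theorem stmt_0 (n : ℕ) (hn : 1 < n) (σ : Equiv.Perm (Fin n)) :
    IsKing ⇑σ ↔ 3 ≤ br ⇑σ := by
  constructor
  · intro hk
    apply le_sInf
    rintro x ⟨i, j, hij, rfl⟩
    have hd : 3 ≤ mdist ⇑σ i j := by
      have hinj : Nat.dist (σ i : ℕ) (σ j : ℕ) ≠ 0 := by
        intro h
        exact hij (σ.injective (Fin.ext (Nat.eq_of_dist_eq_zero h)))
      have hij' : Nat.dist (i : ℕ) (j : ℕ) ≠ 0 := by
        intro h
        exact hij (Fin.ext (Nat.eq_of_dist_eq_zero h))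
      unfold mdist
      rcases Nat.lt_or_ge (Nat.dist (i : ℕ) (j : ℕ)) 3 with h3 | h3
      · interval_cases h : Nat.dist (i : ℕ) (j : ℕ)
        · omega
        · -- adjacent: use king property
          have : (j : ℕ) = (i : ℕ) + 1 ∨ (i : ℕ) = (j : ℕ) + 1 := by
            have := Nat.dist_eq_sub_of_le (le_refl (i : ℕ))
            unfold Nat.dist at h
            omega
          rcases this with hc | hc
          · have := hk i j hc; omega
          · have := hk j i hc
            rw [Nat.dist_comm] at this; omega
        · omega
      · omega
    calc (3 : ℕ∞) = ((3 : ℕ) : ℕ∞) := by norm_num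
    _ ≤ (mdist ⇑σ i j : ℕ∞) := by exact_mod_cast hd
  · intro hb i j hji
    have hij : i ≠ j := by
      intro h; subst h; omega
    have hle : (3 : ℕ∞) ≤ (mdist ⇑σ i j : ℕ∞) :=
      le_trans hb (sInf_le ⟨i, j, hij, rfl⟩)
    have h3 : 3 ≤ mdist ⇑σ i j := by exact_mod_cast hle
    have h1 : Nat.dist (i : ℕ) (j : ℕ) = 1 := by
      unfold Nat.dist; omega
    unfold mdist at h3
    omega
end

section
/- A permutation σ of order n > 1 is a cylindrical king permutation if and only if its cyclic breadth is at least 3. -/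
open Finset

theorem stmt_1 (n : ℕ) (hn : 1 < n) (σ : Equiv.Perm (Fin n)) :
    IsCylKing ⇑σ ↔ 3 ≤ cbr ⇑σ := by
  constructor
  · intro hk
    apply le_sInf
    rintro x ⟨i, j, hij, rfl⟩
    have hσ : (σ i : ℕ) ≠ (σ j : ℕ) := fun h => hij (σ.injective (Fin.ext h))
    have hi := i.isLt
    have hj := j.isLt
    have hij' : (i : ℕ) ≠ (j : ℕ) := fun h => hij (Fin.ext h)
    have hgoal : 3 ≤ cdist ⇑σ i j := by
      by_cases hadj : Nat.dist (i : ℕ) (j : ℕ) = 1 ∨ Nat.dist (i : ℕ) (j : ℕ) = n - 1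
      · -- cyclically adjacent: use the king hypothesis
        have hcases : (j : ℕ) = (i : ℕ) + 1 ∨ (i : ℕ) = (j : ℕ) + 1 ∨
            ((i : ℕ) = 0 ∧ (j : ℕ) = n - 1) ∨ ((j : ℕ) = 0 ∧ (i : ℕ) = n - 1) := by
          simp only [Nat.dist] at hadj; omega
        have hdistσ : 1 < Nat.dist (σ i : ℕ) (σ j : ℕ) := by
          rcases hcases with h | h | ⟨h1, h2⟩ | ⟨h1, h2⟩
          · exact hk i j hij (by rw [h]; exact (Nat.mod_eq_of_lt (h ▸ hj)).symm)
          · rw [Nat.dist_comm]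
            exact hk j i hij.symm (by rw [h]; exact (Nat.mod_eq_of_lt (h ▸ hi)).symm)
          · rw [Nat.dist_comm]
            refine hk j i hij.symm ?_
            have : (j : ℕ) + 1 = n := by omega
            rw [this, Nat.mod_self, h1]
          · refine hk i j hij ?_
            have : (i : ℕ) + 1 = n := by omega
            rw [this, Nat.mod_self, h1]
        simp only [cdist, Nat.dist] at hdistσ ⊢
        omega
      · simp only [cdist, Nat.dist] at hadj ⊢
        omega
    exact_mod_cast Nat.cast_le.mpr hgoal
  · intro h3 i j hij hmod
    have hmem : (cdist ⇑σ i j : ℕ∞) ∈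
        {x : ℕ∞ | ∃ i j : Fin n, i ≠ j ∧ x = (cdist ⇑σ i j : ℕ∞)} := ⟨i, j, hij, rfl⟩
    have h3' : (3 : ℕ∞) ≤ (cdist ⇑σ i j : ℕ∞) := le_trans h3 (sInf_le hmem)
    have hcd : 3 ≤ cdist ⇑σ i j := by exact_mod_cast h3'
    have hi := i.isLt
    have hj := j.isLt
    have hcases : (j : ℕ) = (i : ℕ) + 1 ∨ ((j : ℕ) = 0 ∧ (i : ℕ) + 1 = n) := by
      rcases Nat.lt_or_ge ((i : ℕ) + 1) n with h | h
      · left; rw [hmod]; exact Nat.mod_eq_of_lt h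
      · right
        have hin : (i : ℕ) + 1 = n := by omega
        refine ⟨?_, hin⟩
        rw [hmod, hin, Nat.mod_self]
    simp only [cdist, Nat.dist] at hcd ⊢
    omega
end

section
/- If σ' ∈ S_{n−1} is obtained from σ ∈ S_n by deleting a single entry (and standardizing), then cbr(σ') ≥ cbr(σ) − 1; that is, omitting a single entry decreases the cyclic breadth by at most one. -/
open Finset

section CbrAux

set_option maxHeartbeats 1000000 in
lemma key (n t s a b p q : ℕ) (hn : t < n) (hs : s < n) (ha : a < n-1) (hb : b < n-1)
    (hp : p < n-1) (hq : q < n-1) :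
    min (Nat.dist (if p < s then p else p+1) (if q < s then q else q+1)
          + min (Nat.dist (if a < t then a else a+1) (if b < t then b else b+1))
                (n - Nat.dist (if a < t then a else a+1) (if b < t then b else b+1)))
      (min (Nat.dist (if p < s then p else p+1) s
              + min (Nat.dist (if a < t then a else a+1) t) (n - Nat.dist (if a < t then a else a+1) t))
           (Nat.dist s (if q < s then q else q+1)
              + min (Nat.dist t (if b < t then b else b+1)) (n - Nat.dist t (if b < t then b else b+1))))
    ≤ Nat.dist p q + min (Nat.dist a b) (n-1 - Nat.dist a b) + 1 := by
  have F1 : Nat.dist a b ≤ Nat.dist (if a < t then a else a+1) (if b < t then b else b+1) ∧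
      (Nat.dist (if a < t then a else a+1) (if b < t then b else b+1) = Nat.dist a b ∨
       (Nat.dist (if a < t then a else a+1) (if b < t then b else b+1) = Nat.dist a b + 1 ∧
        Nat.dist (if a < t then a else a+1) t + Nat.dist t (if b < t then b else b+1)
          = Nat.dist a b + 1)) := by
    simp only [Nat.dist]; split_ifs <;> omega
  have F2 : Nat.dist (if p < s then p else p+1) (if q < s then q else q+1) = Nat.dist p q ∨
      (Nat.dist (if p < s then p else p+1) (if q < s then q else q+1) = Nat.dist p q + 1 ∧
       Nat.dist (if p < s then p else p+1) s + Nat.dist s (if q < s then q else q+1)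
         = Nat.dist p q + 1) := by
    simp only [Nat.dist]; split_ifs <;> omega
  have F4 : Nat.dist (if a < t then a else a+1) (if b < t then b else b+1) = Nat.dist a b →
      Nat.dist (if a < t then a else a+1) t + Nat.dist t (if b < t then b else b+1) ≤ n - Nat.dist a b ∨
      (n - Nat.dist (if a < t then a else a+1) t) + Nat.dist t (if b < t then b else b+1) ≤ n - Nat.dist a b ∨
      Nat.dist (if a < t then a else a+1) t + (n - Nat.dist t (if b < t then b else b+1)) ≤ n - Nat.dist a b := by
    simp only [Nat.dist]; split_ifs <;> omega
  have F5 : Nat.dist a b ≤ n - 2 := by simp only [Nat.dist]; omega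
  generalize hx1 : Nat.dist (if a < t then a else a+1) t = x1 at F1 F4 ⊢
  generalize hx2 : Nat.dist t (if b < t then b else b+1) = x2 at F1 F4 ⊢
  generalize hD : Nat.dist (if a < t then a else a+1) (if b < t then b else b+1) = D at F1 F4 ⊢
  generalize hv1 : Nat.dist (if p < s then p else p+1) s = v1 at F2 ⊢
  generalize hv2 : Nat.dist s (if q < s then q else q+1) = v2 at F2 ⊢
  generalize hV : Nat.dist (if p < s then p else p+1) (if q < s then q else q+1) = V at F2 ⊢
  generalize hd : Nat.dist a b = d at F1 F4 F5 ⊢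
  generalize he : Nat.dist p q = e at F2 ⊢
  have hK1 : min D (n - D) ≤ D := min_le_left _ _
  have hK2 : min D (n - D) ≤ n - D := min_le_right _ _
  generalize hK : min D (n - D) = K at hK1 hK2 ⊢
  have hM11 : min x1 (n - x1) ≤ x1 := min_le_left _ _
  have hM12 : min x1 (n - x1) ≤ n - x1 := min_le_right _ _
  generalize hM1 : min x1 (n - x1) = M1 at hM11 hM12 ⊢
  have hM21 : min x2 (n - x2) ≤ x2 := min_le_left _ _
  have hM22 : min x2 (n - x2) ≤ n - x2 := min_le_right _ _
  generalize hM2 : min x2 (n - x2) = M2 at hM21 hM22 ⊢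
  clear hx1 hx2 hD hv1 hv2 hV hd he hK hM1 hM2 F5 hn hs ha hb hp hq
  omega


lemma gapmono {m M : ℕ} {g : Fin m → Fin M} (hg : StrictMono g) :
    ∀ k : ℕ, ∀ x y : Fin m, (y : ℕ) = (x : ℕ) + k → (g x : ℕ) + k ≤ (g y : ℕ) := by
  intro k
  induction k with
  | zero =>
    intro x y hxy
    have : x = y := Fin.ext (by omega)
    subst this; simp
  | succ k ih =>
    intro x y hxy
    have hy' : (x : ℕ) + k < m := by have := y.isLt; omega
    have h1 := ih x ⟨(x : ℕ) + k, hy'⟩ rfl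
    have h2 : g ⟨(x : ℕ) + k, hy'⟩ < g y := hg (by simp [Fin.lt_def]; omega)
    have h3 := Fin.lt_def.mp h2
    simp at h1 h3 ⊢
    omega

lemma shift {m : ℕ} (g : Fin m → Fin (m + 1)) (hg : StrictMono g) (v : Fin (m + 1))
    (hv : ∀ a, g a ≠ v) (x : Fin m) :
    (g x : ℕ) = if (x : ℕ) < (v : ℕ) then (x : ℕ) else (x : ℕ) + 1 := by
  have hm : 0 < m := x.pos
  have lb : ∀ y : Fin m, (y : ℕ) ≤ (g y : ℕ) := by
    intro y
    have := gapmono hg (y : ℕ) ⟨0, hm⟩ y (by simp)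
    omega
  have ub : ∀ y : Fin m, (g y : ℕ) ≤ (y : ℕ) + 1 := by
    intro y
    have h1 := gapmono hg (m - 1 - (y : ℕ)) y ⟨m - 1, by omega⟩ (by simp; have := y.isLt; omega)
    have h2 := (g ⟨m - 1, by omega⟩).isLt
    have := y.isLt
    omega
  split_ifs with hx
  · by_contra hne
    have hgx : (g x : ℕ) = (x : ℕ) + 1 := by have := lb x; have := ub x; omega
    have hvlt : (v : ℕ) - 1 < m := by have := v.isLt; omega
    have hw := gapmono hg ((v : ℕ) - 1 - (x : ℕ)) x ⟨(v : ℕ) - 1, hvlt⟩ (by simp; omega)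
    have hub := ub ⟨(v : ℕ) - 1, hvlt⟩
    have : (g ⟨(v : ℕ) - 1, hvlt⟩ : ℕ) = (v : ℕ) := by simp at hub ⊢; omega
    exact hv _ (Fin.ext this)
  · by_contra hne
    have hgx : (g x : ℕ) = (x : ℕ) := by have := lb x; have := ub x; omega
    have hvlt : (v : ℕ) < m := by omega
    have hw := gapmono hg ((x : ℕ) - (v : ℕ)) ⟨(v : ℕ), hvlt⟩ x (by simp; omega)
    have hlb := lb ⟨(v : ℕ), hvlt⟩
    have : (g ⟨(v : ℕ), hvlt⟩ : ℕ) = (v : ℕ) := by simp at hlb hw ⊢; omega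
    exact hv _ (Fin.ext this)

end CbrAux

theorem stmt_5 (n : ℕ) (σ : Equiv.Perm (Fin n)) (σ' : Equiv.Perm (Fin (n - 1)))
    (k : Fin n) (h : IsPatternOn ⇑σ (Finset.univ.erase k) ⇑σ') :
    cbr ⇑σ - 1 ≤ cbr ⇑σ' := by
  obtain ⟨f, hmono, hmem, hcard, hiso⟩ := h
  obtain ⟨m, rfl⟩ : ∃ m, n = m + 1 := ⟨n - 1, by have := k.pos; omega⟩
  have hfk : ∀ a, f a ≠ k := fun a => (Finset.mem_erase.mp (hmem a)).1
  have hf : ∀ a : Fin (m + 1 - 1), (f a : ℕ) = if (a : ℕ) < (k : ℕ) then (a : ℕ) else (a : ℕ) + 1 :=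
    shift f hmono k hfk
  have hψmono : StrictMono (fun x : Fin (m + 1 - 1) => σ (f (σ'.symm x))) := by
    intro x y hxy
    exact (hiso _ _).mp (by rwa [Equiv.apply_symm_apply, Equiv.apply_symm_apply])
  have hψmiss : ∀ x, (fun x : Fin (m + 1 - 1) => σ (f (σ'.symm x))) x ≠ σ k := by
    intro x hx
    exact hfk _ (σ.injective hx)
  have hψ : ∀ a : Fin (m + 1 - 1),
      (σ (f a) : ℕ) = if (σ' a : ℕ) < (σ k : ℕ) then (σ' a : ℕ) else (σ' a : ℕ) + 1 := by
    intro a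
    have := shift _ hψmono (σ k) hψmiss (σ' a)
    simpa using this
  rw [cbr]
  refine le_sInf ?_
  rintro x ⟨i, j, hij, rfl⟩
  rw [tsub_le_iff_right]
  have hkey := key (m + 1) (k : ℕ) (σ k : ℕ) (i : ℕ) (j : ℕ) (σ' i : ℕ) (σ' j : ℕ)
    k.isLt (σ k).isLt i.isLt j.isLt (σ' i).isLt (σ' j).isLt
  have e1 : cdist (⇑σ) (f i) (f j) =
      Nat.dist (if (σ' i : ℕ) < (σ k : ℕ) then (σ' i : ℕ) else (σ' i : ℕ)+1)
               (if (σ' j : ℕ) < (σ k : ℕ) then (σ' j : ℕ) else (σ' j : ℕ)+1)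
        + min (Nat.dist (if (i : ℕ) < (k : ℕ) then (i : ℕ) else (i : ℕ)+1)
                        (if (j : ℕ) < (k : ℕ) then (j : ℕ) else (j : ℕ)+1))
              ((m+1) - Nat.dist (if (i : ℕ) < (k : ℕ) then (i : ℕ) else (i : ℕ)+1)
                        (if (j : ℕ) < (k : ℕ) then (j : ℕ) else (j : ℕ)+1)) := by
    rw [cdist, hf i, hf j, hψ i, hψ j]
  have e2 : cdist (⇑σ) (f i) k =
      Nat.dist (if (σ' i : ℕ) < (σ k : ℕ) then (σ' i : ℕ) else (σ' i : ℕ)+1) (σ k : ℕ)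
        + min (Nat.dist (if (i : ℕ) < (k : ℕ) then (i : ℕ) else (i : ℕ)+1) (k : ℕ))
              ((m+1) - Nat.dist (if (i : ℕ) < (k : ℕ) then (i : ℕ) else (i : ℕ)+1) (k : ℕ)) := by
    rw [cdist, hf i, hψ i]
  have e3 : cdist (⇑σ) k (f j) =
      Nat.dist (σ k : ℕ) (if (σ' j : ℕ) < (σ k : ℕ) then (σ' j : ℕ) else (σ' j : ℕ)+1)
        + min (Nat.dist (k : ℕ) (if (j : ℕ) < (k : ℕ) then (j : ℕ) else (j : ℕ)+1))
              ((m+1) - Nat.dist (k : ℕ) (if (j : ℕ) < (k : ℕ) then (j : ℕ) else (j : ℕ)+1)) := by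
    rw [cdist, hf j, hψ j]
  have eR : cdist (⇑σ') i j = Nat.dist (σ' i : ℕ) (σ' j : ℕ)
      + min (Nat.dist (i : ℕ) (j : ℕ)) ((m+1) - 1 - Nat.dist (i : ℕ) (j : ℕ)) := rfl
  have h3 : cdist (⇑σ) (f i) (f j) ≤ cdist (⇑σ') i j + 1 ∨
      cdist (⇑σ) (f i) k ≤ cdist (⇑σ') i j + 1 ∨
      cdist (⇑σ) k (f j) ≤ cdist (⇑σ') i j + 1 := by
    rw [e1, e2, e3, eR]
    omega
  rcases h3 with h | h | h
  · exact le_trans (sInf_le ⟨f i, f j, hmono.injective.ne hij, rfl⟩) (by exact_mod_cast h)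
  · exact le_trans (sInf_le ⟨f i, k, hfk i, rfl⟩) (by exact_mod_cast h)
  · exact le_trans (sInf_le ⟨k, f j, Ne.symm (hfk j), rfl⟩) (by exact_mod_cast h)
end

section
/- If σ' ∈ S_{n−1} is obtained from σ ∈ S_n by deleting a single entry (and standardizing), then br(σ') ≥ br(σ) − 1. -/
open Finset

lemma gap_lemma {m m' : ℕ} (g : Fin m → Fin m') (hg : StrictMono g) :
    ∀ d : ℕ, ∀ a b : Fin m, (b : ℕ) = (a : ℕ) + d → (g a : ℕ) + d ≤ (g b : ℕ) := by
  intro d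
  induction d with
  | zero =>
    intro a b hb
    have : a = b := Fin.ext (by omega)
    subst this; omega
  | succ d ih =>
    intro a b hb
    have hb' : (a : ℕ) + d < m := by have := b.isLt; omega
    have h1 := ih a ⟨(a : ℕ) + d, hb'⟩ rfl
    have h2 : g ⟨(a : ℕ) + d, hb'⟩ < g b := hg (by simp [Fin.lt_def]; omega)
    have h3 : (g ⟨(a : ℕ) + d, hb'⟩ : ℕ) < (g b : ℕ) := h2
    omega

lemma gchar {m m' : ℕ} (hm : m' = m + 1) (g : Fin m → Fin m') (hg : StrictMono g)
    (c : Fin m') (hc : ∀ x, g x ≠ c) (a : Fin m) :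
    (g a : ℕ) = if (a : ℕ) < (c : ℕ) then (a : ℕ) else (a : ℕ) + 1 := by
  have hmpos : 0 < m := a.pos
  have hlb : ∀ x : Fin m, (x : ℕ) ≤ (g x : ℕ) := by
    intro x
    have := gap_lemma g hg (x : ℕ) ⟨0, hmpos⟩ x (by simp)
    omega
  have hub : ∀ x : Fin m, (g x : ℕ) ≤ (x : ℕ) + 1 := by
    intro x
    have hlast : m - 1 < m := by omega
    have h1 := gap_lemma g hg (m - 1 - (x : ℕ)) x ⟨m - 1, hlast⟩ (by simp; have := x.isLt; omega)
    have h2 : (g ⟨m - 1, hlast⟩ : ℕ) < m' := (g _).isLt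
    have := x.isLt
    omega
  have hclt : (c : ℕ) < m' := c.isLt
  by_cases hac : (a : ℕ) < (c : ℕ)
  · simp only [hac, if_pos]
    by_contra hne
    have hga : (g a : ℕ) = (a : ℕ) + 1 := by have := hlb a; have := hub a; omega
    have hx : (c : ℕ) - 1 < m := by have := a.isLt; omega
    have h1 := gap_lemma g hg ((c : ℕ) - 1 - (a : ℕ)) a ⟨(c : ℕ) - 1, hx⟩ (by simp; omega)
    have h2 := hub ⟨(c : ℕ) - 1, hx⟩
    exact hc ⟨(c : ℕ) - 1, hx⟩ (Fin.ext (by simp at h1 h2 ⊢; omega))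
  · simp only [hac, if_neg, not_false_iff]
    by_contra hne
    have hga : (g a : ℕ) = (a : ℕ) := by have := hlb a; have := hub a; omega
    have hx : (c : ℕ) < m := by have := a.isLt; omega
    have h1 := gap_lemma g hg ((a : ℕ) - (c : ℕ)) ⟨(c : ℕ), hx⟩ a (by simp; omega)
    have h2 := hlb ⟨(c : ℕ), hx⟩
    exact hc ⟨(c : ℕ), hx⟩ (Fin.ext (by simp at h1 h2 ⊢; omega))

theorem stmt_6' (n : ℕ) (σ : Equiv.Perm (Fin n)) (σ' : Equiv.Perm (Fin (n - 1)))
    (k : Fin n) (h : IsPatternOn ⇑σ (Finset.univ.erase k) ⇑σ') :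
    br ⇑σ - 1 ≤ br ⇑σ' := by
  obtain ⟨f, hfmono, hfmem, hcard, hiff⟩ := h
  refine le_sInf ?_
  rintro x ⟨i, j, hij, rfl⟩
  rw [tsub_le_iff_right]
  have hm : n = (n - 1) + 1 := by have := i.pos; have := i.isLt; omega
  have hfk : ∀ x, f x ≠ k := fun x => Finset.ne_of_mem_erase (hfmem x)
  have hf'mono : StrictMono (fun a => σ (f (σ'.symm a))) := by
    intro a b hab
    have := (hiff (σ'.symm a) (σ'.symm b)).mp
    simp only [Equiv.apply_symm_apply] at this
    exact this hab
  have hf'av : ∀ a, (fun a => σ (f (σ'.symm a))) a ≠ σ k :=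
    fun a h' => hfk _ (σ.injective h')
  have h1 := gchar hm f hfmono k hfk i
  have h2 := gchar hm f hfmono k hfk j
  have h3 := gchar hm _ hf'mono (σ k) hf'av (σ' i)
  have h4 := gchar hm _ hf'mono (σ k) hf'av (σ' j)
  simp only [Equiv.symm_apply_apply] at h3 h4
  have hij' : (i : ℕ) ≠ (j : ℕ) := fun hh => hij (Fin.ext hh)
  have hpq : ((σ' i : ℕ)) ≠ ((σ' j : ℕ)) :=
    fun hh => hij (σ'.injective (Fin.ext hh))
  by_cases hcase : mdist ⇑σ (f i) (f j) ≤ mdist ⇑σ' i j + 1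
  · calc br ⇑σ ≤ (mdist ⇑σ (f i) (f j) : ℕ∞) :=
          sInf_le ⟨f i, f j, fun hh => hij (hfmono.injective hh), rfl⟩
      _ ≤ ((mdist ⇑σ' i j + 1 : ℕ) : ℕ∞) := Nat.cast_le.mpr hcase
      _ = (mdist ⇑σ' i j : ℕ∞) + 1 := by push_cast; ring
  · have hne1 : ((f i : ℕ)) ≠ (k : ℕ) := fun hh => hfk i (Fin.ext hh)
    have hne2 : ((k : ℕ)) ≠ ((f j : ℕ)) := fun hh => hfk j (Fin.ext hh.symm)
    have hkey : mdist ⇑σ (f i) k ≤ mdist ⇑σ' i j + 1 ∨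
        mdist ⇑σ k (f j) ≤ mdist ⇑σ' i j + 1 := by
      simp only [mdist, Nat.dist] at hcase ⊢
      split_ifs at h1 h2 h3 h4 <;> omega
    rcases hkey with hk | hk
    · calc br ⇑σ ≤ (mdist ⇑σ (f i) k : ℕ∞) := sInf_le ⟨f i, k, hfk i, rfl⟩
        _ ≤ ((mdist ⇑σ' i j + 1 : ℕ) : ℕ∞) := Nat.cast_le.mpr hk
        _ = (mdist ⇑σ' i j : ℕ∞) + 1 := by push_cast; ring
    · calc br ⇑σ ≤ (mdist ⇑σ k (f j) : ℕ∞) :=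
          sInf_le ⟨k, f j, fun hh => hfk j hh.symm, rfl⟩
        _ ≤ ((mdist ⇑σ' i j + 1 : ℕ) : ℕ∞) := Nat.cast_le.mpr hk
        _ = (mdist ⇑σ' i j : ℕ∞) + 1 := by push_cast; ring

theorem stmt_6 (n : ℕ) (σ : Equiv.Perm (Fin n)) (σ' : Equiv.Perm (Fin (n - 1)))
    (k : Fin n) (h : IsPatternOn ⇑σ (Finset.univ.erase k) ⇑σ') :
    br ⇑σ - 1 ≤ br ⇑σ' := stmt_6' n σ σ' k h
end

section
/- If σ is k-prolific in S_n then it is 1-prolific, hence a king permutation; in particular σ ∈ S_n is 1-prolific if and only if br(σ) ≥ 3. -/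
open Finset

/-- `σ` is `k`-prolific in `S_n`: it contains `n.choose k` distinct patterns of
length `n - k`. -/
def KProlificS {n : ℕ} (σ : Fin n → Fin n) (k : ℕ) : Prop :=
  {π : Equiv.Perm (Fin (n - k)) | ContainsPat σ ⇑π}.ncard = n.choose k


section
variable {n m : ℕ} (σ : Equiv.Perm (Fin n)) (s : Finset (Fin n))

lemma card_image_perm (h : s.card = m) : (s.image ⇑σ).card = m := by
  rw [Finset.card_image_of_injective _ σ.injective]; exact h

noncomputable def pattFun (h : s.card = m) : Fin m → Fin m :=
  fun a => ((s.image ⇑σ).orderIsoOfFin (card_image_perm σ s h)).symm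
    ⟨σ (s.orderEmbOfFin h a), Finset.mem_image_of_mem _ (Finset.orderEmbOfFin_mem s h a)⟩

lemma pattFun_lt (h : s.card = m) (a b : Fin m) :
    pattFun σ s h a < pattFun σ s h b ↔
      σ (s.orderEmbOfFin h a) < σ (s.orderEmbOfFin h b) := by
  simp [pattFun, OrderIso.lt_iff_lt, Subtype.mk_lt_mk]

lemma pattFun_bij (h : s.card = m) : Function.Bijective (pattFun σ s h) := by
  rw [Fintype.bijective_iff_injective_and_card]
  refine ⟨fun a b hab => ?_, rfl⟩
  simp only [pattFun] at hab
  have := ((s.image ⇑σ).orderIsoOfFin (card_image_perm σ s h)).symm.injective hab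
  have h2 : σ (s.orderEmbOfFin h a) = σ (s.orderEmbOfFin h b) := congrArg Subtype.val this
  exact (s.orderEmbOfFin h).injective (σ.injective h2)

noncomputable def patt (m : ℕ) (s : Finset (Fin n)) : Equiv.Perm (Fin m) :=
  if h : s.card = m then Equiv.ofBijective _ (pattFun_bij σ s h) else 1

lemma patt_lt (h : s.card = m) (a b : Fin m) :
    patt σ m s a < patt σ m s b ↔
      σ (s.orderEmbOfFin h a) < σ (s.orderEmbOfFin h b) := by
  simp only [patt, dif_pos h, Equiv.ofBijective_apply]
  exact pattFun_lt σ s h a b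

end

lemma perm_eq_of_lt_iff {m : ℕ} (π ρ : Equiv.Perm (Fin m))
    (h : ∀ a b, π a < π b ↔ ρ a < ρ b) : π = ρ := by
  have hsm : StrictMono (fun x => ρ (π.symm x)) := by
    intro x y hxy
    rw [← h]
    simpa using hxy
  have hrange : Set.range (fun x => ρ (π.symm x)) = Set.range (id : Fin m → Fin m) := by
    rw [Set.range_id]
    exact Set.range_eq_univ.2 fun y => ⟨π (ρ.symm y), by simp⟩
  have hid : StrictMono (id : Fin m → Fin m) := strictMono_id
  have heq : (fun x => ρ (π.symm x)) = (id : Fin m → Fin m) :=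
    (hsm.range_inj hid).1 hrange
  apply Equiv.ext; intro a
  have h2 : ρ (π.symm (π a)) = id (π a) := congrFun heq (π a)
  simpa using h2.symm

section
variable {n m : ℕ} (σ : Equiv.Perm (Fin n))

lemma containsPat_patt (s : Finset (Fin n)) (h : s.card = m) :
    ContainsPat ⇑σ ⇑(patt σ m s) :=
  ⟨⇑(s.orderEmbOfFin h), (s.orderEmbOfFin h).strictMono,
    fun a b => patt_lt σ s h a b⟩

lemma eq_patt_of_containsPat {π : Equiv.Perm (Fin m)} (hc : ContainsPat ⇑σ ⇑π) :
    ∃ s ∈ Finset.powersetCard m (univ : Finset (Fin n)), π = patt σ m s := by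
  obtain ⟨f, hf, hiff⟩ := hc
  refine ⟨Finset.image f univ, ?_, ?_⟩
  · rw [Finset.mem_powersetCard]
    exact ⟨Finset.subset_univ _,
      by rw [Finset.card_image_of_injective _ hf.injective, card_univ, Fintype.card_fin]⟩
  · have hcard : (Finset.image f univ).card = m := by
      rw [Finset.card_image_of_injective _ hf.injective, card_univ, Fintype.card_fin]
    have hfs : ∀ x, f x ∈ Finset.image f univ := fun x => Finset.mem_image_of_mem _ (mem_univ x)
    have hfe : f = ⇑((Finset.image f univ).orderEmbOfFin hcard) :=
      Finset.orderEmbOfFin_unique hcard hfs hf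
    refine perm_eq_of_lt_iff _ _ fun a b => ?_
    rw [hiff a b, patt_lt σ _ hcard a b, ← hfe]

lemma pattSet_eq (m : ℕ) :
    {π : Equiv.Perm (Fin m) | ContainsPat ⇑σ ⇑π} =
      ↑((Finset.powersetCard m (univ : Finset (Fin n))).image (patt σ m)) := by
  ext π
  simp only [Set.mem_setOf_eq, Finset.coe_image, Set.mem_image, Finset.mem_coe]
  constructor
  · intro hc
    obtain ⟨s, hs, rfl⟩ := eq_patt_of_containsPat σ hc
    exact ⟨s, hs, rfl⟩
  · rintro ⟨s, hs, rfl⟩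
    exact containsPat_patt σ s (Finset.mem_powersetCard.1 hs).2

lemma kprolific_iff_injOn (k : ℕ) (hkn : k ≤ n) :
    KProlificS ⇑σ k ↔
      Set.InjOn (patt σ (n - k)) ↑(Finset.powersetCard (n - k) (univ : Finset (Fin n))) := by
  unfold KProlificS
  rw [pattSet_eq σ (n - k), Set.ncard_coe_finset]
  have hcard : (Finset.powersetCard (n - k) (univ : Finset (Fin n))).card = n.choose k := by
    rw [Finset.card_powersetCard, card_univ, Fintype.card_fin, Nat.choose_symm hkn]
  rw [← hcard]
  exact Finset.card_image_iff

end

lemma adj_lt_iff {u v w : ℕ} (h : Nat.dist u v = 1) (hwu : w ≠ u) (hwv : w ≠ v) :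
    (w < u ↔ w < v) ∧ (u < w ↔ v < w) := by
  simp [Nat.dist] at h; omega

lemma swap_lt {n : ℕ} {i j w z : Fin n} (hij : (j : ℕ) = (i : ℕ) + 1)
    (hw : w ≠ j) (hz : z ≠ j) (hwz : w < z) : Equiv.swap i j w < Equiv.swap i j z := by
  have hwz' : (w : ℕ) < (z : ℕ) := hwz
  have hwj : (w : ℕ) ≠ (j : ℕ) := fun h => hw (Fin.ext h)
  have hzj : (z : ℕ) ≠ (j : ℕ) := fun h => hz (Fin.ext h)
  rcases eq_or_ne w i with rfl | hwi
  · rw [Equiv.swap_apply_left, Equiv.swap_apply_of_ne_of_ne (by omega : z ≠ w) hz]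
    exact Fin.lt_def.2 (by omega)
  · have hwi' : (w : ℕ) ≠ (i : ℕ) := fun h => hwi (Fin.ext h)
    rw [Equiv.swap_apply_of_ne_of_ne hwi hw]
    rcases eq_or_ne z i with rfl | hzi
    · rw [Equiv.swap_apply_left]
      exact Fin.lt_def.2 (by omega)
    · rw [Equiv.swap_apply_of_ne_of_ne hzi hz]
      exact hwz

section
variable {n m : ℕ} (σ : Equiv.Perm (Fin n))

lemma swap_sigma_lt_iff {i j w z : Fin n} (hij : (j : ℕ) = (i : ℕ) + 1)
    (hd : Nat.dist (σ i : ℕ) (σ j : ℕ) = 1) (hw : w ≠ j) (hz : z ≠ j) :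
    (σ (Equiv.swap i j w) < σ (Equiv.swap i j z) ↔ σ w < σ z) := by
  by_cases hwi : w = i
  · by_cases hzi : z = i
    · simp [hwi, hzi]
    · rw [hwi, Equiv.swap_apply_left, Equiv.swap_apply_of_ne_of_ne hzi hz]
      have h1 : (σ z : ℕ) ≠ (σ i : ℕ) := fun h => hzi (σ.injective (Fin.ext h))
      have h2 : (σ z : ℕ) ≠ (σ j : ℕ) := fun h => hz (σ.injective (Fin.ext h))
      have := (adj_lt_iff hd h1 h2).2
      simp only [Fin.lt_def]
      omega
  · rw [Equiv.swap_apply_of_ne_of_ne hwi hw]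
    by_cases hzi : z = i
    · rw [hzi, Equiv.swap_apply_left]
      have h1 : (σ w : ℕ) ≠ (σ i : ℕ) := fun h => hwi (σ.injective (Fin.ext h))
      have h2 : (σ w : ℕ) ≠ (σ j : ℕ) := fun h => hw (σ.injective (Fin.ext h))
      have := (adj_lt_iff hd h1 h2).1
      simp only [Fin.lt_def]
      omega
    · rw [Equiv.swap_apply_of_ne_of_ne hzi hz]

section
variable {n m : ℕ} (σ : Equiv.Perm (Fin n))

lemma patt_swap (i j : Fin n) (hij : (j : ℕ) = (i : ℕ) + 1)
    (hd : Nat.dist (σ i : ℕ) (σ j : ℕ) = 1)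
    (s : Finset (Fin n)) (hs : s.card = m) (hi : i ∈ s) (hj : j ∉ s) :
    patt σ m s = patt σ m (insert j (s.erase i)) := by
  have hje : j ∉ s.erase i := fun h => hj (Finset.mem_of_mem_erase h)
  have hs' : (insert j (s.erase i)).card = m := by
    rw [Finset.card_insert_of_notMem hje, Finset.card_erase_of_mem hi, hs]
    have : 1 ≤ m := by
      rw [← hs]; exact Finset.card_pos.2 ⟨i, hi⟩
    omega
  have hmem : ∀ a : Fin m, a ∈ (univ : Finset (Fin m)) →
      Equiv.swap i j (s.orderEmbOfFin hs a) ∈ insert j (s.erase i) := by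
    intro a _
    by_cases h : s.orderEmbOfFin hs a = i
    · rw [h, Equiv.swap_apply_left]; exact Finset.mem_insert_self _ _
    · have hmem' := Finset.orderEmbOfFin_mem s hs a
      have hne : s.orderEmbOfFin hs a ≠ j := fun he => hj (he ▸ hmem')
      rw [Equiv.swap_apply_of_ne_of_ne h hne]
      exact Finset.mem_insert_of_mem (Finset.mem_erase.2 ⟨h, hmem'⟩)
  have hsm : StrictMono (fun a => Equiv.swap i j (s.orderEmbOfFin hs a)) := by
    intro a b hab
    refine swap_lt hij ?_ ?_ ((s.orderEmbOfFin hs).strictMono hab)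
    · exact fun he => hj (he ▸ Finset.orderEmbOfFin_mem s hs a)
    · exact fun he => hj (he ▸ Finset.orderEmbOfFin_mem s hs b)
  have hfe : (fun a => Equiv.swap i j (s.orderEmbOfFin hs a)) =
      ⇑((insert j (s.erase i)).orderEmbOfFin hs') :=
    Finset.orderEmbOfFin_unique hs' (fun a => hmem a (mem_univ a)) hsm
  refine perm_eq_of_lt_iff _ _ fun a b => ?_
  rw [patt_lt σ s hs a b, patt_lt σ _ hs' a b, ← hfe]
  exact (swap_sigma_lt_iff σ hij hd
    (fun he => hj (he ▸ Finset.orderEmbOfFin_mem s hs a))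
    (fun he => hj (he ▸ Finset.orderEmbOfFin_mem s hs b))).symm

lemma not_injOn_of_not_king {k : ℕ} (hk : 1 ≤ k) (hkn : k ≤ n - 1)
    (hnk : ¬ IsKing ⇑σ) :
    ¬ Set.InjOn (patt σ (n - k)) ↑(Finset.powersetCard (n - k) (univ : Finset (Fin n))) := by
  unfold IsKing at hnk
  push_neg at hnk
  obtain ⟨i, j, hij, hd⟩ := hnk
  have hij' : i ≠ j := fun h => by omega
  have hd1 : Nat.dist (σ i : ℕ) (σ j : ℕ) = 1 := by
    have hne : (σ i : ℕ) ≠ (σ j : ℕ) :=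
      fun h => hij' (σ.injective (Fin.ext h))
    simp only [Nat.dist] at hd ⊢
    omega
  -- find s with i ∈ s ⊆ univ.erase j, card = n - k
  have hi_mem : i ∈ (univ : Finset (Fin n)).erase j := Finset.mem_erase.2 ⟨hij', mem_univ i⟩
  obtain ⟨s, his, hsub, hcard⟩ := Finset.exists_subsuperset_card_eq (n := n - k)
    (Finset.singleton_subset_iff.2 hi_mem) (by
      simp only [Finset.card_singleton]
      omega) (by
      rw [Finset.card_erase_of_mem (mem_univ j), card_univ, Fintype.card_fin]
      omega)
  have hi : i ∈ s := his (Finset.mem_singleton_self i)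
  have hj : j ∉ s := fun h => Finset.notMem_erase j univ (hsub h)
  intro hinj
  have h1 : s ∈ ↑(Finset.powersetCard (n - k) (univ : Finset (Fin n))) := by
    rw [Finset.mem_powersetCard]
    exact ⟨Finset.subset_univ _, hcard⟩
  have h2 : insert j (s.erase i) ∈ ↑(Finset.powersetCard (n - k) (univ : Finset (Fin n))) := by
    rw [Finset.mem_powersetCard]
    refine ⟨Finset.subset_univ _, ?_⟩
    rw [Finset.card_insert_of_notMem (fun h => hj (Finset.mem_of_mem_erase h)),
      Finset.card_erase_of_mem hi, hcard]
    omega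
  have := hinj h1 h2 (patt_swap σ i j hij hd1 s hcard hi hj)
  rw [this] at hj
  exact hj (Finset.mem_insert_self j _)

end


section
variable {n : ℕ} (σ : Equiv.Perm (Fin n))

/-- The increasing enumeration of `univ.erase x`. -/
def eraseEmb (x : Fin n) : Fin (n - 1) → Fin n :=
  fun a => if (a : ℕ) < (x : ℕ) then ⟨a, lt_of_lt_of_le a.2 (Nat.sub_le n 1)⟩
    else ⟨(a : ℕ) + 1, by have := a.2; omega⟩

lemma eraseEmb_strictMono (x : Fin n) : StrictMono (eraseEmb x) := by
  intro a b hab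
  have hab' : (a : ℕ) < (b : ℕ) := hab
  unfold eraseEmb
  split <;> split <;> exact Fin.mk_lt_mk.2 (by omega)

lemma eraseEmb_mem (x : Fin n) (a : Fin (n - 1)) :
    eraseEmb x a ∈ (univ : Finset (Fin n)).erase x := by
  refine Finset.mem_erase.2 ⟨?_, mem_univ _⟩
  unfold eraseEmb
  split <;> exact fun h => by
    have := congrArg Fin.val h
    simp only at this
    omega

lemma card_univ_erase (x : Fin n) : ((univ : Finset (Fin n)).erase x).card = n - 1 := by
  rw [Finset.card_erase_of_mem (mem_univ x), card_univ, Fintype.card_fin]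

lemma orderEmbOfFin_erase {s : Finset (Fin n)} (x : Fin n)
    (hsx : s = (univ : Finset (Fin n)).erase x) (h : s.card = n - 1) :
    ⇑(s.orderEmbOfFin h) = eraseEmb x := by
  subst hsx
  exact (Finset.orderEmbOfFin_unique h (fun a => eraseEmb_mem x a)
    (eraseEmb_strictMono x)).symm

lemma image_erase_univ (x : Fin n) :
    ((univ : Finset (Fin n)).erase x).image ⇑σ = (univ : Finset (Fin n)).erase (σ x) := by
  ext b
  constructor
  · intro hb
    obtain ⟨a, ha, rfl⟩ := Finset.mem_image.1 hb
    have hax := (Finset.mem_erase.1 ha).1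
    exact Finset.mem_erase.2 ⟨fun h => hax (σ.injective h), mem_univ _⟩
  · intro hb
    have hbx := (Finset.mem_erase.1 hb).1
    refine Finset.mem_image.2 ⟨σ.symm b, Finset.mem_erase.2 ⟨?_, mem_univ _⟩, by simp⟩
    intro h
    apply hbx
    rw [← h]; simp

lemma patt_erase_apply (x : Fin n) (a : Fin (n - 1)) :
    σ (eraseEmb x a) = eraseEmb (σ x) (patt σ (n - 1) ((univ : Finset (Fin n)).erase x) a) := by
  set s := (univ : Finset (Fin n)).erase x with hs
  have h : s.card = n - 1 := card_univ_erase x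
  have hp : patt σ (n - 1) s a = pattFun σ s h a := by
    simp only [patt, dif_pos h, Equiv.ofBijective_apply]
  rw [hp]
  have h2 : ((s.image ⇑σ).orderIsoOfFin (card_image_perm σ s h)) (pattFun σ s h a) =
      ⟨σ (s.orderEmbOfFin h a), Finset.mem_image_of_mem _ (Finset.orderEmbOfFin_mem s h a)⟩ := by
    simp only [pattFun, OrderIso.apply_symm_apply]
  have h3 : ((s.image ⇑σ).orderEmbOfFin (card_image_perm σ s h)) (pattFun σ s h a) =
      σ (s.orderEmbOfFin h a) := by
    rw [← Finset.coe_orderIsoOfFin_apply, h2]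
  have h4 : ⇑((s.image ⇑σ).orderEmbOfFin (card_image_perm σ s h)) = eraseEmb (σ x) :=
    orderEmbOfFin_erase (σ x) (by rw [hs, image_erase_univ]) _
  have h5 : ⇑(s.orderEmbOfFin h) = eraseEmb x := orderEmbOfFin_erase x hs h
  rw [h4, h5] at h3
  rw [← h3]

lemma king_aux (hking : IsKing ⇑σ) (x y : Fin n) (hxy : (x : ℕ) < (y : ℕ))
    (heq : patt σ (n - 1) ((univ : Finset (Fin n)).erase x) =
      patt σ (n - 1) ((univ : Finset (Fin n)).erase y)) : False := by
  have hx1 : (x : ℕ) < n - 1 := by have := y.2; omega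
  set a : Fin (n - 1) := ⟨(x : ℕ), hx1⟩ with ha
  have e1 := patt_erase_apply σ x a
  have e2 := patt_erase_apply σ y a
  rw [heq] at e1
  set d := patt σ (n - 1) ((univ : Finset (Fin n)).erase y) a with hd
  have hxa : eraseEmb x a = ⟨(x : ℕ) + 1, by omega⟩ := by
    simp only [eraseEmb, ha, lt_self_iff_false, if_false]
  have hya : eraseEmb y a = ⟨(x : ℕ), by omega⟩ := by
    simp only [eraseEmb, ha, if_pos hxy]
  rw [hxa] at e1
  rw [hya] at e2
  have hking' := hking ⟨(x : ℕ), by omega⟩ ⟨(x : ℕ) + 1, by omega⟩ rfl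
  have hv1 : (σ ⟨(x : ℕ) + 1, by omega⟩ : ℕ) = (eraseEmb (σ x) d : ℕ) := congrArg Fin.val e1
  have hv2 : (σ ⟨(x : ℕ), by omega⟩ : ℕ) = (eraseEmb (σ y) d : ℕ) := congrArg Fin.val e2
  have hb1 : (eraseEmb (σ x) d : ℕ) = (d : ℕ) ∨ (eraseEmb (σ x) d : ℕ) = (d : ℕ) + 1 := by
    unfold eraseEmb; split <;> simp
  have hb2 : (eraseEmb (σ y) d : ℕ) = (d : ℕ) ∨ (eraseEmb (σ y) d : ℕ) = (d : ℕ) + 1 := by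
    unfold eraseEmb; split <;> simp
  simp only [Nat.dist] at hking'
  omega

lemma injOn_of_king (hn : 1 ≤ n) (hking : IsKing ⇑σ) :
    Set.InjOn (patt σ (n - 1)) ↑(Finset.powersetCard (n - 1) (univ : Finset (Fin n))) := by
  have herase : ∀ s : Finset (Fin n), s ∈ Finset.powersetCard (n - 1) (univ : Finset (Fin n)) →
      ∃ x : Fin n, s = (univ : Finset (Fin n)).erase x := by
    intro s hsmem
    rw [Finset.mem_powersetCard] at hsmem
    have hc : sᶜ.card = 1 := by
      rw [Finset.card_compl, hsmem.2, Fintype.card_fin]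
      omega
    obtain ⟨x, hx⟩ := Finset.card_eq_one.1 hc
    refine ⟨x, ?_⟩
    ext b
    simp only [Finset.mem_erase, mem_univ, and_true]
    constructor
    · intro hb h
      rw [h] at hb
      have : x ∈ sᶜ := by rw [hx]; exact Finset.mem_singleton_self x
      exact Finset.mem_compl.1 this hb
    · intro hb
      by_contra hbs
      have : b ∈ sᶜ := Finset.mem_compl.2 hbs
      rw [hx, Finset.mem_singleton] at this
      exact hb this
  intro s hs t ht heq
  obtain ⟨x, rfl⟩ := herase s hs
  obtain ⟨y, rfl⟩ := herase t ht
  rcases lt_trichotomy (x : ℕ) (y : ℕ) with h | h | h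
  · exact absurd heq (fun he => king_aux σ hking x y h he)
  · rw [Fin.ext h]
  · exact absurd heq.symm (fun he => king_aux σ hking y x h he)

lemma br_ge3_iff_king : 3 ≤ br ⇑σ ↔ IsKing ⇑σ := by
  rw [br, le_sInf_iff]
  constructor
  · intro h i j hij
    have hne : i ≠ j := fun he => by omega
    have := h _ ⟨i, j, hne, rfl⟩
    have h3 : 3 ≤ mdist ⇑σ i j := by exact_mod_cast this
    simp only [mdist, Nat.dist] at h3 ⊢
    omega
  · rintro hking x ⟨i, j, hne, rfl⟩
    have h3 : 3 ≤ mdist ⇑σ i j := by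
      have hvne : (σ i : ℕ) ≠ (σ j : ℕ) := fun h => hne (σ.injective (Fin.ext h))
      have hine : (i : ℕ) ≠ (j : ℕ) := fun h => hne (Fin.ext h)
      rcases Nat.lt_or_ge (Nat.dist (i : ℕ) (j : ℕ)) 2 with hlt | hge
      · have h1 : (j : ℕ) = (i : ℕ) + 1 ∨ (i : ℕ) = (j : ℕ) + 1 := by
          simp only [Nat.dist] at hlt; omega
        rcases h1 with h1 | h1
        · have := hking i j h1
          simp only [mdist, Nat.dist] at this ⊢; omega
        · have := hking j i h1
          simp only [mdist, Nat.dist] at this ⊢; omega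
      · simp only [mdist, Nat.dist] at hge ⊢; omega
    exact_mod_cast h3

end
theorem stmt_10 (n k : ℕ) (hk : 1 ≤ k) (hkn : k ≤ n - 1) (σ : Equiv.Perm (Fin n)) :
    (KProlificS ⇑σ k → KProlificS ⇑σ 1 ∧ IsKing ⇑σ) ∧
      (KProlificS ⇑σ 1 ↔ 3 ≤ br ⇑σ) := by
  have hn : 2 ≤ n := by omega
  have hkn' : k ≤ n := by omega
  have hking_of_k : ∀ k' : ℕ, 1 ≤ k' → k' ≤ n - 1 → KProlificS ⇑σ k' → IsKing ⇑σ := by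
    intro k' hk' hkn1 hp
    by_contra hnk
    exact not_injOn_of_not_king σ hk' hkn1 hnk
      ((kprolific_iff_injOn σ k' (by omega)).1 hp)
  have hone_of_king : IsKing ⇑σ → KProlificS ⇑σ 1 :=
    fun hking => (kprolific_iff_injOn σ 1 (by omega)).2 (injOn_of_king σ (by omega) hking)
  refine ⟨fun hp => ?_, ?_⟩
  · have hking := hking_of_k k hk hkn hp
    exact ⟨hone_of_king hking, hking⟩
  · constructor
    · intro hp
      exact (br_ge3_iff_king σ).2 (hking_of_k 1 le_rfl (by omega) hp)
    · intro hbr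
      exact hone_of_king ((br_ge3_iff_king σ).1 hbr)
end
end

section
/- For every cylindrical king permutation σ ∈ CK_n with n ≥ 5, there exists π ∈ orb([31425]) ∪ orb([24135]) such that π ⪯ σ; equivalently, every cylindrical king permutation of order at least 5 contains some cylindrical king pattern of length 5. -/
open Finset

set_option linter.unusedSectionVars false


section SpreadMachinery

variable {α : Type*} [LinearOrder α]

/-- `y` is strictly between `x` and `z`. -/
def Btw3 (x y z : α) : Prop := (x < y ∧ y < z) ∨ (z < y ∧ y < x)

/-- word contains pattern 2413 or 3142 among the first `N` letters -/
def PatP (N : ℕ) (w : ℕ → α) : Prop :=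
  ∃ p1 p2 p3 p4, p1 < p2 ∧ p2 < p3 ∧ p3 < p4 ∧ p4 < N ∧
    ((w p3 < w p1 ∧ w p1 < w p4 ∧ w p4 < w p2) ∨
     (w p2 < w p4 ∧ w p4 < w p1 ∧ w p1 < w p3))

def InjP (N : ℕ) (w : ℕ → α) : Prop := ∀ i j, i < N → j < N → w i = w j → i = j

def SpreadP (N : ℕ) (w : ℕ → α) : Prop :=
  ∀ i, i + 1 < N → ∃ k, k < N ∧ Btw3 (w i) (w k) (w (i+1))

def SplitP (N : ℕ) (w : ℕ → α) : Prop :=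
  ∃ k, 0 < k ∧ k < N ∧
    ((∀ i j, i < k → k ≤ j → j < N → w i < w j) ∨
     (∀ i j, i < k → k ≤ j → j < N → w j < w i))

lemma patP_mono {M N : ℕ} {w : ℕ → α} (h : PatP M w) (hMN : M ≤ N) : PatP N w := by
  obtain ⟨p1,p2,p3,p4,a,b,c,d,e⟩ := h
  exact ⟨p1,p2,p3,p4,a,b,c,by omega,e⟩

lemma btw3_dual {x y z : α} :
    Btw3 (OrderDual.toDual x) (OrderDual.toDual y) (OrderDual.toDual z) ↔ Btw3 x y z := by
  simp only [Btw3, OrderDual.toDual_lt_toDual]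
  tauto

lemma patP_dual {N : ℕ} {w : ℕ → α} :
    PatP N (fun i => OrderDual.toDual (w i)) ↔ PatP N w := by
  constructor
  · rintro ⟨p1,p2,p3,p4,a,b,c,d,(⟨h1,h2,h3⟩|⟨h1,h2,h3⟩)⟩
    · exact ⟨p1,p2,p3,p4,a,b,c,d, Or.inr ⟨by simpa using h3, by simpa using h2, by simpa using h1⟩⟩
    · exact ⟨p1,p2,p3,p4,a,b,c,d, Or.inl ⟨by simpa using h3, by simpa using h2, by simpa using h1⟩⟩
  · rintro ⟨p1,p2,p3,p4,a,b,c,d,(⟨h1,h2,h3⟩|⟨h1,h2,h3⟩)⟩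
    · exact ⟨p1,p2,p3,p4,a,b,c,d, Or.inr ⟨by simpa using h3, by simpa using h2, by simpa using h1⟩⟩
    · exact ⟨p1,p2,p3,p4,a,b,c,d, Or.inl ⟨by simpa using h3, by simpa using h2, by simpa using h1⟩⟩

lemma injP_dual {N : ℕ} {w : ℕ → α} (h : InjP N w) :
    InjP N (fun i => OrderDual.toDual (w i)) := by
  intro i j hi hj he
  exact h i j hi hj (by simpa using he)

lemma spreadP_dual {N : ℕ} {w : ℕ → α} (h : SpreadP N w) :
    SpreadP N (fun i => OrderDual.toDual (w i)) := by
  intro i hi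
  obtain ⟨k, hk, hb⟩ := h i hi
  exact ⟨k, hk, btw3_dual.mpr hb⟩

lemma splitP_dual {N : ℕ} {w : ℕ → α}
    (h : SplitP N (fun i => OrderDual.toDual (w i))) : SplitP N w := by
  obtain ⟨k, h0, h1, hbr⟩ := h
  rcases hbr with hp | hm
  · exact ⟨k, h0, h1, Or.inr (fun i j hi hj hjN => by simpa using hp i j hi hj hjN)⟩
  · exact ⟨k, h0, h1, Or.inl (fun i j hi hj hjN => by simpa using hm i j hi hj hjN)⟩

lemma step_plus (N k : ℕ) (w : ℕ → α)
    (hk0 : 0 < k) (hkN : k < N)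
    (hplus : ∀ i j, i < k → k ≤ j → j < N → w i < w j)
    (inj : InjP (N+1) w) (hnp : ¬ PatP (N+1) w) : SplitP (N+1) w := by
  classical
  by_cases hA : ∀ i, i < k → w i < w N
  · refine ⟨k, hk0, by omega, Or.inl ?_⟩
    intro i j hi hj hjN
    rcases Nat.lt_or_ge j N with hj' | hj'
    · exact hplus i j hi hj hj'
    · have : j = N := by omega
      subst this; exact hA i hi
  · push_neg at hA
    obtain ⟨i0, hi0k, hi0⟩ := hA
    have hi0' : w N < w i0 :=
      lt_of_le_of_ne hi0 (fun h => by have := inj N i0 (by omega) (by omega) h; omega)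
    by_cases hB : ∀ j, j < N → w N < w j
    · refine ⟨N, by omega, by omega, Or.inr ?_⟩
      intro i j hi hj hjN
      have : j = N := by omega
      subst this; exact hB i hi
    · push_neg at hB
      obtain ⟨j0, hj0N, hj0⟩ := hB
      have hj0' : w j0 < w N :=
        lt_of_le_of_ne hj0 (fun h => by have := inj j0 N (by omega) (by omega) h; omega)
      have hj0k : j0 < k := by
        by_contra h
        have h1 := hplus i0 j0 hi0k (by omega) hj0N
        exact absurd ((h1.trans hj0').trans hi0') (lt_irrefl _)
      have hnohl : ∀ i j, i < j → j < k → w N < w i → w j < w N → False := by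
        intro i j hij hjk hhi hlj
        exact hnp ⟨i, j, k, N, hij, by omega, by omega, by omega,
          Or.inr ⟨hlj, hhi, hplus i k (by omega) le_rfl hkN⟩⟩
      have hex : ∃ i, w N < w i := ⟨i0, hi0'⟩
      set k' := Nat.find hex with hk'def
      have hk'spec : w N < w k' := Nat.find_spec hex
      have hk'min : ∀ m, m < k' → ¬ w N < w m := fun m hm => Nat.find_min hex hm
      have hk'le : k' ≤ i0 := Nat.find_min' hex hi0'
      have hk'pos : 0 < k' := by
        rcases Nat.eq_zero_or_pos k' with h0 | h
        · exfalso
          have h0' : w N < w 0 := by rw [← h0]; exact hk'spec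
          have hj00 : j0 ≠ 0 := by
            intro h; subst h
            exact absurd (hj0'.trans h0') (lt_irrefl _)
          exact hnohl 0 j0 (by omega) hj0k h0' hj0'
        · exact h
      have hlow : ∀ i, i < k' → w i < w N := by
        intro i hi
        have hne : w i ≠ w N := fun h => by
          have := inj i N (by omega) (by omega) h; omega
        exact lt_of_le_of_ne (not_lt.mp (hk'min i hi)) hne
      refine ⟨k', hk'pos, by omega, Or.inl ?_⟩
      intro i j hi hj hjN1
      have hiN : w i < w N := hlow i hi
      rcases Nat.lt_or_ge j N with hjN | hjN
      · rcases Nat.lt_or_ge j k with hjk | hjk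
        · have hNj : w N < w j := by
            rcases Nat.eq_or_lt_of_le hj with he | hlt2
            · rw [← he]; exact hk'spec
            · by_contra hc
              have hne : w j ≠ w N := fun h => by
                have := inj j N (by omega) (by omega) h; omega
              exact hnohl k' j hlt2 hjk hk'spec (lt_of_le_of_ne (not_lt.mp hc) hne)
          exact hiN.trans hNj
        · exact hplus i j (by omega) hjk hjN
      · have : j = N := by omega
        subst this; exact hiN

end SpreadMachinery

lemma split_claim : ∀ (N : ℕ) {α : Type*} [LinearOrder α] (w : ℕ → α),
    2 ≤ N → InjP N w → ¬ PatP N w → SplitP N w := by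
  intro N
  induction N with
  | zero => intro α _ w h; omega
  | succ N IH =>
    intro α _ w hN inj hnp
    rcases Nat.lt_or_ge N 2 with h2 | h2
    · have hN1 : N = 1 := by omega
      subst hN1
      have hne : w 0 ≠ w 1 := fun h => by have := inj 0 1 (by omega) (by omega) h; omega
      rcases lt_or_gt_of_ne hne with h | h
      · refine ⟨1, by omega, by omega, Or.inl ?_⟩
        intro i j hi hj hjN
        have hi0 : i = 0 := by omega
        have hj1 : j = 1 := by omega
        rw [hi0, hj1]; exact h
      · refine ⟨1, by omega, by omega, Or.inr ?_⟩
        intro i j hi hj hjN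
        have hi0 : i = 0 := by omega
        have hj1 : j = 1 := by omega
        rw [hi0, hj1]; exact h
    · have injN : InjP N w := fun i j hi hj => inj i j (by omega) (by omega)
      have hnpN : ¬ PatP N w := fun h => hnp (patP_mono h (by omega))
      obtain ⟨k, hk0, hkN, hbr⟩ := IH w h2 injN hnpN
      rcases hbr with hplus | hminus
      · exact step_plus N k w hk0 hkN hplus inj hnp
      · have hd := step_plus (α := αᵒᵈ) N k (fun i => OrderDual.toDual (w i)) hk0 hkN
          (fun i j hi hj hjN => by simpa using hminus i j hi hj hjN)
          (injP_dual inj)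
          (fun h => hnp (patP_dual.mp h))
        exact splitP_dual hd

lemma spread_step {α : Type*} [LinearOrder α] (N : ℕ) (hN : 4 ≤ N) (w : ℕ → α)
    (inj : InjP N w) (hsp : SpreadP N w) (k : ℕ) (hk0 : 0 < k) (hkN : k < N)
    (hplus : ∀ i j, i < k → k ≤ j → j < N → w i < w j)
    (IH : ∀ M, M < N → 2 ≤ M → ∀ (v : ℕ → α), InjP M v → SpreadP M v → PatP M v) :
    PatP N w := by
  rcases Nat.lt_or_ge k 2 with hk2 | hk2
  · have hk1 : k = 1 := by omega
    subst hk1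
    have inj' : InjP (N-1) (fun t => w (t+1)) := by
      intro i j hi hj h
      have := inj (i+1) (j+1) (by omega) (by omega) h
      omega
    have hsp' : SpreadP (N-1) (fun t => w (t+1)) := by
      intro i hi
      obtain ⟨k0, hk0N, hbtw⟩ := hsp (i+1) (by omega)
      have hk0pos : k0 ≠ 0 := by
        rintro rfl
        have ha := hplus 0 (i+1) (by omega) (by omega) (by omega)
        have hb := hplus 0 (i+1+1) (by omega) (by omega) (by omega)
        rcases hbtw with ⟨h1, _⟩ | ⟨h1, _⟩
        · exact absurd (ha.trans h1) (lt_irrefl _)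
        · exact absurd (hb.trans h1) (lt_irrefl _)
      refine ⟨k0 - 1, by omega, ?_⟩
      have hkk : k0 - 1 + 1 = k0 := by omega
      show Btw3 (w (i+1)) (w (k0-1+1)) (w (i+1+1))
      rw [hkk]
      exact hbtw
    have hp' := IH (N-1) (by omega) (by omega) _ inj' hsp'
    obtain ⟨p1,p2,p3,p4,a,b,c,d,e⟩ := hp'
    exact ⟨p1+1, p2+1, p3+1, p4+1, by omega, by omega, by omega, by omega, e⟩
  · have inj' : InjP k w := fun i j hi hj h => inj i j (by omega) (by omega) h
    have hsp' : SpreadP k w := by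
      intro i hi
      obtain ⟨k0, hk0N, hbtw⟩ := hsp i (by omega)
      have hk0k : k0 < k := by
        by_contra h
        have ha := hplus i k0 (by omega) (by omega) hk0N
        have hb := hplus (i+1) k0 (by omega) (by omega) hk0N
        rcases hbtw with ⟨_, h2⟩ | ⟨_, h2⟩
        · exact absurd (hb.trans h2) (lt_irrefl _)
        · exact absurd (ha.trans h2) (lt_irrefl _)
      exact ⟨k0, hk0k, hbtw⟩
    have := IH k (by omega) (by omega) w inj' hsp'
    exact patP_mono this (by omega)

lemma spread_pat : ∀ (N : ℕ) {α : Type*} [LinearOrder α] (w : ℕ → α),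
    2 ≤ N → InjP N w → SpreadP N w → PatP N w := by
  intro N
  induction N using Nat.strong_induction_on with
  | _ N IH =>
    intro α _ w hN inj hsp
    rcases Nat.lt_or_ge N 4 with h4 | h4
    · exfalso
      interval_cases N
      · obtain ⟨k, hk, hbtw⟩ := hsp 0 (by omega)
        interval_cases k
        · rcases hbtw with ⟨h,_⟩|⟨_,h⟩ <;> exact lt_irrefl _ h
        · rcases hbtw with ⟨_,h⟩|⟨h,_⟩ <;> exact lt_irrefl _ h
      · obtain ⟨k, hk, h0⟩ := hsp 0 (by omega)
        obtain ⟨l, hl, h1⟩ := hsp 1 (by omega)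
        interval_cases k
        · rcases h0 with ⟨h,_⟩|⟨_,h⟩ <;> exact lt_irrefl _ h
        · rcases h0 with ⟨_,h⟩|⟨h,_⟩ <;> exact lt_irrefl _ h
        · interval_cases l
          · rcases h0 with ⟨a0,b0⟩|⟨a0,b0⟩ <;> rcases h1 with ⟨a1,b1⟩|⟨a1,b1⟩
            · exact lt_irrefl _ ((a0.trans b0).trans a1)
            · exact lt_irrefl _ (a0.trans a1)
            · exact lt_irrefl _ (b1.trans b0)
            · exact lt_irrefl _ ((b1.trans a0).trans b0)
          · rcases h1 with ⟨h,_⟩|⟨_,h⟩ <;> exact lt_irrefl _ h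
          · rcases h1 with ⟨_,h⟩|⟨h,_⟩ <;> exact lt_irrefl _ h
    · by_cases hp : PatP N w
      · exact hp
      obtain ⟨k, hk0, hkN, hbr⟩ := split_claim N w (by omega) inj hp
      rcases hbr with hplus | hminus
      · exact spread_step N h4 w inj hsp k hk0 hkN hplus
          (fun M hM hM2 v iv sv => IH M hM v hM2 iv sv)
      · have hd := spread_step (α := αᵒᵈ) N h4 (fun i => OrderDual.toDual (w i))
          (injP_dual inj) (spreadP_dual hsp) k hk0 hkN
          (fun i j hi hj hjN => by simpa using hminus i j hi hj hjN)
          (fun M hM hM2 v iv sv => IH M hM v hM2 iv sv)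
        exact patP_dual.mp hd


/-- pattern 13524 (zero-based 02413) -/
def patA : Fin 5 → Fin 5 := fun i =>
  ⟨if i.val = 0 then 0 else if i.val = 1 then 2 else if i.val = 2 then 4
    else if i.val = 3 then 1 else 3, by split_ifs <;> omega⟩

/-- pattern 14253 (zero-based 03142) -/
def patB : Fin 5 → Fin 5 := fun i =>
  ⟨if i.val = 0 then 0 else if i.val = 1 then 3 else if i.val = 2 then 1
    else if i.val = 3 then 4 else 2, by split_ifs <;> omega⟩

lemma patA_bij : Function.Bijective patA := by decide
lemma patB_bij : Function.Bijective patB := by decide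

lemma patA_king : IsCylKing patA := by unfold IsCylKing; decide
lemma patB_king : IsCylKing patB := by unfold IsCylKing; decide

lemma patA_std (g : Fin 5 → ℕ) (h1 : g 0 < g 3) (h2 : g 3 < g 1) (h3 : g 1 < g 4)
    (h4 : g 4 < g 2) : ∀ a b : Fin 5, patA a < patA b ↔ g a < g b := by
  intro a b
  fin_cases a <;> fin_cases b <;>
    simp only [patA, patB, Fin.mk_lt_mk,
      show (⟨0, by omega⟩:Fin 5) = 0 from rfl, show (⟨1, by omega⟩:Fin 5) = 1 from rfl,
      show (⟨2, by omega⟩:Fin 5) = 2 from rfl, show (⟨3, by omega⟩:Fin 5) = 3 from rfl,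
      show (⟨4, by omega⟩:Fin 5) = 4 from rfl] <;> norm_num <;> omega

lemma patB_std (g : Fin 5 → ℕ) (h1 : g 0 < g 2) (h2 : g 2 < g 4) (h3 : g 4 < g 1)
    (h4 : g 1 < g 3) : ∀ a b : Fin 5, patB a < patB b ↔ g a < g b := by
  intro a b
  fin_cases a <;> fin_cases b <;>
    simp only [patA, patB, Fin.mk_lt_mk,
      show (⟨0, by omega⟩:Fin 5) = 0 from rfl, show (⟨1, by omega⟩:Fin 5) = 1 from rfl,
      show (⟨2, by omega⟩:Fin 5) = 2 from rfl, show (⟨3, by omega⟩:Fin 5) = 3 from rfl,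
      show (⟨4, by omega⟩:Fin 5) = 4 from rfl] <;> norm_num <;> omega

lemma cylking_rot (f : Fin 5 → Fin 5) (hf : IsCylKing f) (r : Fin 5) :
    IsCylKing (fun i => f (i + r)) := by
  intro i j hne hj
  have hj' : j = i + 1 := by
    apply Fin.ext
    rw [hj, Fin.val_add]
    norm_num
  subst hj'
  have key : (i + 1) + r = (i + r) + 1 := add_right_comm i 1 r
  show 1 < Nat.dist (f (i + r) : ℕ) (f ((i + 1) + r) : ℕ)
  rw [key]
  apply hf (i + r) ((i + r) + 1)
  · intro h
    have h2 := congrArg Fin.val h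
    rw [Fin.val_add] at h2
    have := (i + r).isLt
    norm_num at h2
    omega
  · rw [Fin.val_add]
    norm_num


theorem stmt_13 (n : ℕ) (hn : 5 ≤ n) (σ : Equiv.Perm (Fin n)) (hσ : IsCylKing ⇑σ) :
    ∃ π : Equiv.Perm (Fin 5), IsCylKing ⇑π ∧ ContainsPat ⇑σ ⇑π := by
  classical
  have hn0 : 0 < n := by omega
  set z : Fin n := ⟨0, hn0⟩ with hz
  set p : Fin n := σ.symm z with hpdef
  set P : ℕ := (p : ℕ) with hPdef
  have hPlt : P < n := p.isLt
  set pos : ℕ → Fin n := fun t => ⟨(P + 1 + t) % n, Nat.mod_lt _ hn0⟩ with hpos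
  set w : ℕ → Fin n := fun t => σ (pos t) with hw
  have hσp : σ p = z := σ.apply_symm_apply z
  have hpos_ne_p : ∀ t, t < n - 1 → pos t ≠ p := by
    intro t ht h
    have hv : (P + 1 + t) % n = P := congrArg Fin.val h
    rcases Nat.lt_or_ge (P + 1 + t) n with hlt | hge
    · rw [Nat.mod_eq_of_lt hlt] at hv; omega
    · rw [Nat.mod_eq_sub_mod hge, Nat.mod_eq_of_lt (by omega)] at hv
      omega
  have hw_ne : ∀ t, t < n - 1 → w t ≠ z := by
    intro t ht h
    exact hpos_ne_p t ht (σ.injective (h.trans hσp.symm))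
  have hinj : InjP (n-1) w := by
    intro i j hi hj he
    have h1 : pos i = pos j := σ.injective he
    have h2 : (P + 1 + i) % n = (P + 1 + j) % n := congrArg Fin.val h1
    have h3 : (P + 1 + i) ≡ (P + 1 + j) [MOD n] := h2
    have h4 : i ≡ j [MOD n] := Nat.ModEq.add_left_cancel' (P + 1) h3
    have h5 : i % n = j % n := h4
    rw [Nat.mod_eq_of_lt (by omega), Nat.mod_eq_of_lt (by omega)] at h5
    exact h5
  have hspread : SpreadP (n-1) w := by
    intro i hi
    have hsucc : ((pos (i+1)) : ℕ) = (((pos i) : ℕ) + 1) % n := by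
      show (P + 1 + (i+1)) % n = ((P + 1 + i) % n + 1) % n
      rw [Nat.mod_add_mod]
      rfl
    have hne2 : pos i ≠ pos (i+1) := by
      intro h
      have h2 := congrArg Fin.val h
      rw [hsucc] at h2
      have hilt : ((pos i : ℕ)) < n := (pos i).isLt
      rcases Nat.lt_or_ge ((pos i : ℕ) + 1) n with hlt | hge
      · rw [Nat.mod_eq_of_lt hlt] at h2; omega
      · rw [Nat.mod_eq_sub_mod hge, Nat.mod_eq_of_lt (by omega)] at h2
        omega
    have hdist := hσ (pos i) (pos (i+1)) hne2 hsucc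
    have halt : ((σ (pos i)) : ℕ) < n := (σ (pos i)).isLt
    have hblt : ((σ (pos (i+1))) : ℕ) < n := (σ (pos (i+1))).isLt
    simp only [Nat.dist] at hdist
    set a : ℕ := ((σ (pos i)) : ℕ) with ha
    set b : ℕ := ((σ (pos (i+1))) : ℕ) with hb
    have hvlt : min a b + 1 < n := by omega
    set k : Fin n := σ.symm ⟨min a b + 1, hvlt⟩ with hk
    have hσk : σ k = ⟨min a b + 1, hvlt⟩ := σ.apply_symm_apply _
    have hkp : k ≠ p := by
      intro h
      have h2 : (⟨min a b + 1, hvlt⟩ : Fin n) = z := by rw [← hσk, h, hσp]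
      have h3 := congrArg Fin.val h2
      simp only [hz] at h3
      omega
    have hposlast : pos (n - 1) = p := by
      apply Fin.ext
      show (P + 1 + (n - 1)) % n = P
      have he : P + 1 + (n - 1) = P + n := by omega
      rw [he, Nat.add_mod_right]
      exact Nat.mod_eq_of_lt hPlt
    obtain ⟨t, ht, hposk⟩ : ∃ t, t < n - 1 ∧ pos t = k := by
      have hfix : pos (((k : ℕ) + n - (P + 1)) % n) = k := by
        apply Fin.ext
        show (P + 1 + ((k : ℕ) + n - (P + 1)) % n) % n = (k : ℕ)
        rw [Nat.add_mod_mod]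
        have he : P + 1 + ((k : ℕ) + n - (P + 1)) = (k : ℕ) + n := by
          have := k.isLt
          omega
        rw [he, Nat.add_mod_right, Nat.mod_eq_of_lt k.isLt]
      refine ⟨((k : ℕ) + n - (P + 1)) % n, ?_, hfix⟩
      have hkn : ((k : ℕ) + n - (P + 1)) % n < n := Nat.mod_lt _ hn0
      have hne1 : ((k : ℕ) + n - (P + 1)) % n ≠ n - 1 := by
        intro he
        apply hkp
        rw [← hfix, he, hposlast]
      omega
    refine ⟨t, ht, ?_⟩
    have hwt : ((w t) : ℕ) = min a b + 1 := by
      show ((σ (pos t)) : ℕ) = _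
      rw [hposk, hσk]
    have hane : a ≠ b := by omega
    rcases Nat.lt_or_ge a b with hab | hab
    · left
      constructor
      · rw [Fin.lt_def]; show a < (w t : ℕ); omega
      · rw [Fin.lt_def]; show (w t : ℕ) < b; omega
    · right
      constructor
      · rw [Fin.lt_def]; show b < (w t : ℕ); omega
      · rw [Fin.lt_def]; show (w t : ℕ) < a; omega
  obtain ⟨p1, p2, p3, p4, h12, h23, h34, h4N, hcase⟩ :=
    spread_pat (n-1) w (by omega) hinj hspread
  -- offsets
  set O : Fin 5 → ℕ := fun i =>
    if i.val = 0 then 0 else if i.val = 1 then p1+1 else if i.val = 2 then p2+1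
    else if i.val = 3 then p3+1 else p4+1 with hO
  have hOlt : ∀ i, O i < n := by
    intro i; simp only [hO]; split_ifs <;> omega
  have hOmono : ∀ i j : Fin 5, i.val < j.val → O i < O j := by
    intro i j h
    have hi5 := i.isLt; have hj5 := j.isLt
    simp only [hO]; split_ifs <;> omega
  have hO0 : O 0 = 0 := rfl
  have hO1 : O 1 = p1 + 1 := rfl
  have hO2 : O 2 = p2 + 1 := rfl
  have hO3 : O 3 = p3 + 1 := rfl
  have hO4 : O 4 = p4 + 1 := rfl
  set c : Fin 5 → Fin n := fun i => ⟨(P + O i) % n, Nat.mod_lt _ hn0⟩ with hcdef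
  have hc0 : c 0 = p := by
    apply Fin.ext
    show (P + O 0) % n = P
    rw [hO0, Nat.add_zero, Nat.mod_eq_of_lt hPlt]
  have hcw : ∀ (i : Fin 5) (q : ℕ), O i = q + 1 → σ (c i) = w q := by
    intro i q hq
    have hcq : c i = pos q := by
      apply Fin.ext
      show (P + O i) % n = (P + 1 + q) % n
      rw [hq]
      congr 1
      omega
    show σ (c i) = σ (pos q)
    rw [hcq]
  have hg1 : σ (c 1) = w p1 := hcw 1 p1 hO1
  have hg2 : σ (c 2) = w p2 := hcw 2 p2 hO2
  have hg3 : σ (c 3) = w p3 := hcw 3 p3 hO3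
  have hg4 : σ (c 4) = w p4 := hcw 4 p4 hO4
  have hσc0 : σ (c 0) = z := by rw [hc0, hσp]
  set g : Fin 5 → ℕ := fun i => ((σ (c i)) : ℕ) with hgdef
  have hgv0 : g 0 = 0 := by
    show ((σ (c 0)) : ℕ) = 0
    rw [hσc0]
  have hgv1 : g 1 = ((w p1) : ℕ) := by show ((σ (c 1)) : ℕ) = _; rw [hg1]
  have hgv2 : g 2 = ((w p2) : ℕ) := by show ((σ (c 2)) : ℕ) = _; rw [hg2]
  have hgv3 : g 3 = ((w p3) : ℕ) := by show ((σ (c 3)) : ℕ) = _; rw [hg3]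
  have hgv4 : g 4 = ((w p4) : ℕ) := by show ((σ (c 4)) : ℕ) = _; rw [hg4]
  -- rotation giving monotone enumeration
  obtain ⟨r, hmono⟩ : ∃ r : Fin 5, StrictMono (fun a : Fin 5 => c (a + r)) := by
    rcases Nat.lt_or_ge (P + O 4) n with h4w | h4w
    · refine ⟨0, ?_⟩
      intro x y hxy
      have hOle : ∀ i : Fin 5, O i ≤ O 4 := by
        intro i
        rcases Nat.lt_or_ge i.val 4 with h | h
        · exact (hOmono i 4 (by simpa using h)).le
        · have hi4 : i = 4 := Fin.ext (by show i.val = 4; have := i.isLt; omega)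
          rw [hi4]
      simp only [add_zero]
      rw [Fin.lt_def]
      show (P + O x) % n < (P + O y) % n
      rw [Nat.mod_eq_of_lt (by have := hOle x; omega), Nat.mod_eq_of_lt (by have := hOle y; omega)]
      have := hOmono x y hxy
      omega
    · -- wrap case
      set t : ℕ := if n ≤ P + O 1 then 1 else if n ≤ P + O 2 then 2
        else if n ≤ P + O 3 then 3 else 4 with htdef
      have ht14 : 1 ≤ t ∧ t ≤ 4 := by rw [htdef]; split_ifs <;> omega
      have hwrapIff : ∀ i : Fin 5, (n ≤ P + O i ↔ t ≤ i.val) := by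
        intro i
        have hi5 := i.isLt
        have hm1 := hOmono
        rw [htdef, hO1, hO2, hO3] 
        simp only [hO]
        rw [hO4] at h4w
        split_ifs <;> omega
      refine ⟨⟨t, by omega⟩, ?_⟩
      intro x y hxy
      have hx5 := x.isLt; have hy5 := y.isLt
      have hxylt : x.val < y.val := hxy
      set xi := x + (⟨t, by omega⟩ : Fin 5) with hxi
      set yi := y + (⟨t, by omega⟩ : Fin 5) with hyi
      have hxiv : xi.val = (x.val + t) % 5 := by rw [hxi, Fin.val_add]
      have hyiv : yi.val = (y.val + t) % 5 := by rw [hyi, Fin.val_add]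
      have hOxilt := hOlt xi
      have hOyilt := hOlt yi
      rw [Fin.lt_def]
      show (P + O xi) % n < (P + O yi) % n
      rcases Nat.lt_or_ge (x.val + t) 5 with hxw | hxw <;>
        rcases Nat.lt_or_ge (y.val + t) 5 with hyw | hyw
      · -- both wrapped
        have h1 : n ≤ P + O xi := (hwrapIff xi).mpr (by omega)
        have h2 : n ≤ P + O yi := (hwrapIff yi).mpr (by omega)
        have h3 : O xi < O yi := hOmono _ _ (by omega)
        rw [Nat.mod_eq_sub_mod h1, Nat.mod_eq_of_lt (by omega),
            Nat.mod_eq_sub_mod h2, Nat.mod_eq_of_lt (by omega)]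
        omega
      · -- x wrapped, y not
        have h1 : n ≤ P + O xi := (hwrapIff xi).mpr (by omega)
        have h2 : P + O yi < n := by
          by_contra hc
          have := (hwrapIff yi).mp (by omega)
          omega
        rw [Nat.mod_eq_sub_mod h1, Nat.mod_eq_of_lt (by omega), Nat.mod_eq_of_lt h2]
        omega
      · -- x not wrapped, y wrapped: impossible
        omega
      · -- both not wrapped
        have h1 : P + O xi < n := by
          by_contra hc
          have := (hwrapIff xi).mp (by omega)
          omega
        have h2 : P + O yi < n := by
          by_contra hc
          have := (hwrapIff yi).mp (by omega)
          omega
        have h3 : O xi < O yi := hOmono _ _ (by omega)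
        rw [Nat.mod_eq_of_lt h1, Nat.mod_eq_of_lt h2]
        omega
  -- value of w p3 / w p2 is nonzero etc.
  have hwpos : ∀ q, q < n - 1 → 0 < ((w q) : ℕ) := by
    intro q hq
    have := hw_ne q hq
    rcases Nat.eq_zero_or_pos ((w q) : ℕ) with h0 | h
    · exact absurd (Fin.ext (by rw [h0] : ((w q) : ℕ) = (z : ℕ))) this
    · exact h
  rcases hcase with hA | hB
  · -- 2413 case : use patA
    have ch1 : g 0 < g 3 := by rw [hgv0, hgv3]; exact hwpos p3 (by omega)
    have ch2 : g 3 < g 1 := by rw [hgv3, hgv1]; exact hA.1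
    have ch3 : g 1 < g 4 := by rw [hgv1, hgv4]; exact hA.2.1
    have ch4 : g 4 < g 2 := by rw [hgv4, hgv2]; exact hA.2.2
    have hstd := patA_std g ch1 ch2 ch3 ch4
    refine ⟨(Equiv.addRight r).trans (Equiv.ofBijective patA patA_bij), ?_, ?_⟩
    · have hcoe : ⇑((Equiv.addRight r).trans (Equiv.ofBijective patA patA_bij))
          = fun i => patA (i + r) := by
        funext x
        simp [Equiv.ofBijective]
      rw [hcoe]
      exact cylking_rot patA patA_king r
    · refine ⟨fun a => c (a + r), hmono, ?_⟩
      intro a b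
      have he : ∀ x : Fin 5, ((Equiv.addRight r).trans (Equiv.ofBijective patA patA_bij)) x
          = patA (x + r) := by
        intro x; simp [Equiv.ofBijective]
      rw [he, he]
      rw [hstd (a + r) (b + r)]
      rw [Fin.lt_def]
  · -- 3142 case : use patB
    have ch1 : g 0 < g 2 := by rw [hgv0, hgv2]; exact hwpos p2 (by omega)
    have ch2 : g 2 < g 4 := by rw [hgv2, hgv4]; exact hB.1
    have ch3 : g 4 < g 1 := by rw [hgv4, hgv1]; exact hB.2.1
    have ch4 : g 1 < g 3 := by rw [hgv1, hgv3]; exact hB.2.2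
    have hstd := patB_std g ch1 ch2 ch3 ch4
    refine ⟨(Equiv.addRight r).trans (Equiv.ofBijective patB patB_bij), ?_, ?_⟩
    · have hcoe : ⇑((Equiv.addRight r).trans (Equiv.ofBijective patB patB_bij))
          = fun i => patB (i + r) := by
        funext x
        simp [Equiv.ofBijective]
      rw [hcoe]
      exact cylking_rot patB patB_king r
    · refine ⟨fun a => c (a + r), hmono, ?_⟩
      intro a b
      have he : ∀ x : Fin 5, ((Equiv.addRight r).trans (Equiv.ofBijective patB patB_bij)) x
          = patB (x + r) := by
        intro x; simp [Equiv.ofBijective]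
      rw [he, he]
      rw [hstd (a + r) (b + r)]
      rw [Fin.lt_def]
end

section
/- Let σ = [5,7,9,6,8,3,1,4,2] ∈ CK_9 and π = [1,3,5,2,4] ∈ CK_5. Then π ≺ σ, but there is no τ ∈ CK_n for any 5 < n < 9 with π ≺ τ ≺ σ; hence the gap 4 in the poset of cylindrical king permutations is attained. -/
open Finset

open Finset in
def idx {n : ℕ} (s : Finset (Fin n)) (x : Fin n) : ℕ := (s.filter (fun y => y < x)).card

def pval {n : ℕ} (σ : Fin n → Fin n) (s : Finset (Fin n)) (x : Fin n) : ℕ :=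
  (s.filter (fun y => σ y < σ x)).card

/-- The element-level statement that some `m`-subset of `σ`'s indices induces a
cylindrical-king pattern containing (via `P`) the pattern `π`. -/
def CylOn {n : ℕ} (σ : Fin n → Fin n) (m : ℕ) (s : Finset (Fin n)) : Prop :=
  ∀ x ∈ s, ∀ z ∈ s, x ≠ z → idx s z = (idx s x + 1) % m →
    1 < Nat.dist (pval σ s x) (pval σ s z)

instance {n : ℕ} (σ : Fin n → Fin n) (m : ℕ) (s : Finset (Fin n)) :
    Decidable (CylOn σ m s) := by unfold CylOn idx pval; infer_instance

def PatOn {n : ℕ} (σ : Fin n → Fin n) (P : ℕ → ℕ) (u : Finset (Fin n)) : Prop :=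
  ∀ x ∈ u, ∀ z ∈ u, (P (idx u x) < P (idx u z) ↔ σ x < σ z)

instance {n : ℕ} (σ : Fin n → Fin n) (P : ℕ → ℕ) (u : Finset (Fin n)) :
    Decidable (PatOn σ P u) := by unfold PatOn idx; infer_instance

def DD {n : ℕ} (σ : Fin n → Fin n) (P : ℕ → ℕ) (m : ℕ) : Prop :=
  ∃ s ∈ Finset.powersetCard m (univ : Finset (Fin n)), CylOn σ m s ∧
    ∃ u ∈ s.powersetCard 5, PatOn σ P u

lemma card_filter_lt {m : ℕ} (a : Fin m) : (univ.filter fun b : Fin m => b < a).card = a := by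
  have : (univ.filter fun b : Fin m => b < a) = Finset.Iio a := by ext b; simp
  rw [this, Fin.card_Iio]

lemma filter_image_card {n m : ℕ} (f : Fin m → Fin n) (hinj : Function.Injective f)
    (p : Fin n → Prop) [DecidablePred p] :
    ((univ.image f).filter p).card = (univ.filter fun b => p (f b)).card := by
  rw [Finset.filter_image, card_image_of_injective _ hinj]

lemma idx_image {n m : ℕ} (f : Fin m → Fin n) (hf : StrictMono f) (a : Fin m) :
    idx (univ.image f) (f a) = a := by
  unfold idx
  rw [filter_image_card f hf.injective]
  have : (univ.filter fun b : Fin m => f b < f a) = univ.filter fun b : Fin m => b < a := by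
    ext b; simp [hf.lt_iff_lt]
  rw [this, card_filter_lt]

lemma perm_coe_eq_card {m : ℕ} (τ : Equiv.Perm (Fin m)) (a : Fin m) :
    (univ.filter fun b => τ b < τ a).card = (τ a : ℕ) := by
  have h : (univ.filter fun b => τ b < τ a) = (Finset.Iio (τ a)).map τ.symm.toEmbedding := by
    ext b
    simp only [mem_filter, mem_univ, true_and, Finset.mem_map, Finset.mem_Iio,
      Equiv.coe_toEmbedding]
    constructor
    · intro hb; exact ⟨τ b, hb, by simp⟩
    · rintro ⟨c, hc, rfl⟩; simpa using hc
  rw [h, card_map, Fin.card_Iio]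

lemma pval_image {n m : ℕ} (σ : Fin n → Fin n) (τ : Equiv.Perm (Fin m))
    (f : Fin m → Fin n) (hinj : Function.Injective f)
    (hiff : ∀ a b, τ a < τ b ↔ σ (f a) < σ (f b)) (a : Fin m) :
    pval σ (univ.image f) (f a) = (τ a : ℕ) := by
  unfold pval
  rw [filter_image_card f hinj]
  have : (univ.filter fun b : Fin m => σ (f b) < σ (f a)) = univ.filter fun b => τ b < τ a := by
    ext b; simp [hiff]
  rw [this, perm_coe_eq_card]

lemma bridge {n m : ℕ} (σ : Fin n → Fin n) (P : ℕ → ℕ) (π : Fin 5 → Fin 5)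
    (hP : ∀ a : Fin 5, P (a : ℕ) = (π a : ℕ))
    (τ : Equiv.Perm (Fin m)) (hk : IsCylKing ⇑τ)
    (f : Fin m → Fin n) (hf : StrictMono f)
    (hiff : ∀ a b, τ a < τ b ↔ σ (f a) < σ (f b))
    (g : Fin 5 → Fin m) (hg : StrictMono g)
    (hiff2 : ∀ a b, π a < π b ↔ τ (g a) < τ (g b)) :
    DD σ P m := by
  refine ⟨univ.image f, ?_, ?_, univ.image (f ∘ g), ?_, ?_⟩
  · rw [Finset.mem_powersetCard]
    exact ⟨subset_univ _, by
      rw [card_image_of_injective _ hf.injective, card_univ, Fintype.card_fin]⟩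
  · rintro x hx z hz hne hidx
    obtain ⟨a, -, rfl⟩ := mem_image.1 hx
    obtain ⟨b, -, rfl⟩ := mem_image.1 hz
    rw [idx_image f hf, idx_image f hf] at hidx
    have hab : a ≠ b := fun h => hne (by rw [h])
    rw [pval_image σ τ f hf.injective hiff, pval_image σ τ f hf.injective hiff]
    exact hk a b hab hidx
  · rw [Finset.mem_powersetCard]
    constructor
    · intro y hy
      obtain ⟨a, -, rfl⟩ := mem_image.1 hy
      exact mem_image_of_mem f (mem_univ (g a))
    · rw [card_image_of_injective _ (hf.comp hg).injective, card_univ, Fintype.card_fin]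
  · rintro x hx z hz
    obtain ⟨a, -, rfl⟩ := mem_image.1 hx
    obtain ⟨b, -, rfl⟩ := mem_image.1 hz
    rw [idx_image (f ∘ g) (hf.comp hg), idx_image (f ∘ g) (hf.comp hg), hP, hP]
    show _ ↔ σ (f (g a)) < σ (f (g b))
    rw [← hiff, ← hiff2]
    exact ⟨fun h => by exact_mod_cast h, fun h => by exact_mod_cast h⟩

instance {n : ℕ} (σ : Fin n → Fin n) (P : ℕ → ℕ) (m : ℕ) : Decidable (DD σ P m) := by
  unfold DD; infer_instance

set_option maxRecDepth 3000 in
lemma D8 : ¬ DD ![4,6,8,5,7,2,0,3,1] (fun i => [0,2,4,1,3].getD i 0) 8 := by decide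

set_option maxRecDepth 3000 in
lemma D7 : ¬ DD ![4,6,8,5,7,2,0,3,1] (fun i => [0,2,4,1,3].getD i 0) 7 := by decide

set_option maxRecDepth 3000 in
lemma D6 : ¬ DD ![4,6,8,5,7,2,0,3,1] (fun i => [0,2,4,1,3].getD i 0) 6 := by decide


instance {n : ℕ} (σ : Fin n → Fin n) : Decidable (IsCylKing σ) := by
  unfold IsCylKing; infer_instance

theorem stmt_16 :
    ∃ (σ : Equiv.Perm (Fin 9)) (π : Equiv.Perm (Fin 5)),
      (∀ i, σ i = ![4, 6, 8, 5, 7, 2, 0, 3, 1] i) ∧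
      (∀ i, π i = ![0, 2, 4, 1, 3] i) ∧
      IsCylKing ⇑σ ∧ IsCylKing ⇑π ∧ ContainsPat ⇑σ ⇑π ∧
      ∀ m : ℕ, 5 < m → m < 9 →
        ¬ ∃ τ : Equiv.Perm (Fin m),
            IsCylKing ⇑τ ∧ ContainsPat ⇑σ ⇑τ ∧ ContainsPat ⇑τ ⇑π := by
  refine ⟨⟨![4,6,8,5,7,2,0,3,1], ![6,8,5,7,0,3,1,4,2], by decide, by decide⟩,
          ⟨![0,2,4,1,3], ![0,3,1,4,2], by decide, by decide⟩,
          fun i => rfl, fun i => rfl, by decide, by decide, ?_, ?_⟩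
  · exact ⟨Fin.castLE (by norm_num), Fin.strictMono_castLE (by norm_num),
      by decide⟩
  · intro m h1 h2
    rintro ⟨τ, hk, ⟨f, hf, hiff⟩, ⟨g, hg, hiff2⟩⟩
    have hb := bridge _ (fun i => [0,2,4,1,3].getD i 0) _ (by decide) τ hk f hf hiff g hg hiff2
    interval_cases m
    · exact D6 hb
    · exact D7 hb
    · exact D8 hb
end
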